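/- Let P : {0,1}^3 → {0,1} be the 1-in-3-SAT predicate (P(x) = 1 iff exactly one of the three inputs is 1). Then the minimum, over all pairwise-uniform distributions μ on {0,1}^3 and all distributions σ supported on satisfying assignments of P, of the total variation distance between μ and σ, equals 1/4. -/
import Mathlib


open Finset

/-- `12 ×` the optimal pairwise-uniform distribution (uniform on odd-weight strings). -/
def mu12 (x : Fin 3 → Bool) : ℤ :=
  if xor (xor (x 0) (x 1)) (x 2) = true then 3 else 0

/-- `12 ×` the uniform distribution on satisfying assignments. -/
def sig12 (x : Fin 3 → Bool) : ℤ :=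
  if (Finset.univ.filter fun i => x i = true).card = 1 then 4 else 0

/-- For the 1-in-3-SAT predicate on `{0,1}³` (satisfied iff exactly one input is true),
the minimum total variation distance between a pairwise-uniform distribution `μ` and a
distribution `σ` supported on satisfying assignments equals `1/4`. -/
theorem stmt_12 :
    IsLeast
      { d : ℝ | ∃ μ σ : (Fin 3 → Bool) → ℝ,
          (∀ x, 0 ≤ μ x) ∧ (∑ x, μ x = 1) ∧
          (∀ x, 0 ≤ σ x) ∧ (∑ x, σ x = 1) ∧
          (∀ i j : Fin 3, i ≠ j → ∀ a b : Bool,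
            ∑ x ∈ Finset.univ.filter (fun x : Fin 3 → Bool => x i = a ∧ x j = b), μ x
              = 1 / 4) ∧
          (∀ x : Fin 3 → Bool,
            (Finset.univ.filter fun i => x i = true).card ≠ 1 → σ x = 0) ∧
          d = (1 / 2) * ∑ x, |μ x - σ x| }
      (1 / 4) := by
  constructor
  · -- membership
    refine ⟨fun x => (mu12 x : ℝ) / 12, fun x => (sig12 x : ℝ) / 12, ?_, ?_, ?_, ?_, ?_, ?_, ?_⟩
    · intro x
      have h : ∀ y : Fin 3 → Bool, (0:ℤ) ≤ mu12 y := by decide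
      have := h x
      positivity
    · have h : ∑ x, mu12 x = 12 := by decide
      rw [← Finset.sum_div]
      rw [show ∑ x : Fin 3 → Bool, (mu12 x : ℝ) = ((∑ x, mu12 x : ℤ) : ℝ) by push_cast; rfl, h]
      norm_num
    · intro x
      have h : ∀ y : Fin 3 → Bool, (0:ℤ) ≤ sig12 y := by decide
      have := h x
      positivity
    · have h : ∑ x, sig12 x = 12 := by decide
      rw [← Finset.sum_div]
      rw [show ∑ x : Fin 3 → Bool, (sig12 x : ℝ) = ((∑ x, sig12 x : ℤ) : ℝ) by push_cast; rfl, h]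
      norm_num
    · intro i j hij a b
      have h : ∑ x ∈ Finset.univ.filter (fun x : Fin 3 → Bool => x i = a ∧ x j = b),
          mu12 x = 3 := by
        revert a b hij; revert i j; decide
      rw [← Finset.sum_div]
      rw [show ∑ x ∈ Finset.univ.filter (fun x : Fin 3 → Bool => x i = a ∧ x j = b),
            (mu12 x : ℝ)
          = ((∑ x ∈ Finset.univ.filter (fun x : Fin 3 → Bool => x i = a ∧ x j = b),
            mu12 x : ℤ) : ℝ) by push_cast; rfl, h]
      norm_num
    · intro x hx
      simp [sig12, hx]
    · have h : ∑ x : Fin 3 → Bool, |mu12 x - sig12 x| = 6 := by decide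
      have habs : ∀ x : Fin 3 → Bool, |(mu12 x : ℝ)/12 - (sig12 x : ℝ)/12|
          = ((|mu12 x - sig12 x| : ℤ) : ℝ) / 12 := by
        intro x
        rw [div_sub_div_same, abs_div]
        push_cast
        norm_num
      rw [Finset.sum_congr rfl fun x _ => habs x, ← Finset.sum_div]
      rw [show ∑ x : Fin 3 → Bool, ((|mu12 x - sig12 x| : ℤ) : ℝ)
          = ((∑ x : Fin 3 → Bool, |mu12 x - sig12 x| : ℤ) : ℝ) by push_cast; rfl, h]
      norm_num
  · -- lower bound
    rintro d ⟨μ, σ, hμ0, hμ1, hσ0, hσ1, hpair, hsupp, hd⟩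
    set p : (Fin 3 → Bool) → Prop :=
      fun x => (Finset.univ.filter fun i => x i = true).card ≠ 1 with hp
    have hS : ∑ x ∈ Finset.univ.filter (fun x : Fin 3 → Bool => x 0 = true ∧ x 1 = true), μ x
        = 1/4 := hpair 0 1 (by decide) true true
    have hkey : ∀ x : Fin 3 → Bool, (x 0 = true ∧ x 1 = true) →
        (Finset.univ.filter fun i => x i = true).card ≠ 1 := by decide
    have hsub : Finset.univ.filter (fun x : Fin 3 → Bool => x 0 = true ∧ x 1 = true)
        ⊆ Finset.univ.filter p := by
      intro x hx
      rw [mem_filter] at hx ⊢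
      exact ⟨hx.1, hkey x hx.2⟩
    have hT : 1/4 ≤ ∑ x ∈ Finset.univ.filter p, μ x := by
      rw [← hS]
      exact Finset.sum_le_sum_of_subset_of_nonneg hsub (fun x _ _ => hμ0 x)
    have hσT : ∑ x ∈ Finset.univ.filter p, σ x = 0 :=
      Finset.sum_eq_zero fun x hx => hsupp x (mem_filter.1 hx).2
    have hsplitμ := Finset.sum_filter_add_sum_filter_not Finset.univ p μ
    have hsplitσ := Finset.sum_filter_add_sum_filter_not Finset.univ p σ
    have hsplitabs := Finset.sum_filter_add_sum_filter_not Finset.univ p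
      (fun x => |μ x - σ x|)
    have h1 : ∑ x ∈ Finset.univ.filter p, (μ x - σ x)
        ≤ ∑ x ∈ Finset.univ.filter p, |μ x - σ x| :=
      Finset.sum_le_sum fun x _ => le_abs_self _
    have h2 : ∑ x ∈ Finset.univ.filter (fun x => ¬ p x), (σ x - μ x)
        ≤ ∑ x ∈ Finset.univ.filter (fun x => ¬ p x), |μ x - σ x| :=
      Finset.sum_le_sum fun x _ => by
        rw [abs_sub_comm]; exact le_abs_self _
    rw [Finset.sum_sub_distrib] at h1 h2
    rw [hd]
    rw [hμ1] at hsplitμ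
    rw [hσ1] at hsplitσ
    linarith
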